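/- Let K and Θ be set-valued maps on ℝ^d such that each Θ(v) ⊆ ℝ^d is closed, ∂K(v) ⊆ Θ(v) for all v, and there is a constant C > 0 with K(v) Δ K(w) ⊆ Θ(v)^{C|v−w|,+} for all v, w ∈ ℝ^d (Δ denotes symmetric difference). Then for every v ∈ ℝ^d the generalized boundary satisfies ∂̃K(v) ⊆ Θ(v), where ∂̃K(v) := { x ∈ ℝ^d : (v,x) ∈ ∂K̃ } and K̃ := { (v,x) ∈ ℝ^d × ℝ^d : x ∈ K(v) }. -/

import Mathlib

open MeasureTheory Metric Set Pointwise

/-- Let `K` and `Θ` be set-valued maps on `ℝ^d` with each `Θ(v)` closed,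
`∂K(v) ⊆ Θ(v)` for all `v`, and a constant `C > 0` with
`K(v) Δ K(w) ⊆ Θ(v)^{C|v-w|,+}` for all `v, w`. Then for every `v` the generalized
boundary `∂̃K(v) := { x : (v,x) ∈ ∂K̃ }`, where `K̃ := { (v,x) : x ∈ K(v) }`,
satisfies `∂̃K(v) ⊆ Θ(v)`. -/
theorem stmt2 {d : ℕ}
    (K Θ : EuclideanSpace ℝ (Fin d) → Set (EuclideanSpace ℝ (Fin d)))
    (hΘcl : ∀ v, IsClosed (Θ v))
    (hbd : ∀ v, frontier (K v) ⊆ Θ v)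
    (C : ℝ) (hC : 0 < C)
    (hsym : ∀ v w, symmDiff (K v) (K w) ⊆
      Θ v + closedBall (0 : EuclideanSpace ℝ (Fin d)) (C * ‖v - w‖)) :
    ∀ v : EuclideanSpace ℝ (Fin d),
      {x : EuclideanSpace ℝ (Fin d) |
        (v, x) ∈ frontier {p : EuclideanSpace ℝ (Fin d) × EuclideanSpace ℝ (Fin d) |
          p.2 ∈ K p.1}} ⊆ Θ v := by
  intro v x hx
  simp only [mem_setOf_eq, frontier_eq_closure_inter_closure] at hx
  obtain ⟨h1, h2⟩ := hx
  rw [← (hΘcl v).closure_eq, Metric.mem_closure_iff]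
  intro ε hε
  by_cases hxi : x ∈ interior (K v)
  · -- x interior: find nearby (w,y) with y ∉ K w; then y ∈ K v \ K w
    obtain ⟨r, hr, hball⟩ := Metric.isOpen_iff.mp isOpen_interior x hxi
    set δ := min r (min (ε / 2) (ε / (2 * C))) with hδdef
    have hδ : 0 < δ := lt_min hr (lt_min (by linarith) (by positivity))
    obtain ⟨⟨w, y⟩, hp, hdist⟩ := Metric.mem_closure_iff.mp h2 δ hδ
    have hyw : y ∉ K w := hp
    rw [Prod.dist_eq, max_lt_iff] at hdist
    obtain ⟨hvw, hxy⟩ := hdist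
    have hyv : y ∈ K v := interior_subset (hball (by
      rw [Metric.mem_ball, dist_comm]
      exact lt_of_lt_of_le hxy (min_le_left _ _)))
    have hymem : y ∈ symmDiff (K v) (K w) := Set.mem_symmDiff.mpr (Or.inl ⟨hyv, hyw⟩)
    obtain ⟨z, hz, b, hb, hzb⟩ := hsym v w hymem
    refine ⟨z, hz, ?_⟩
    have hbn : ‖b‖ ≤ C * ‖v - w‖ := mem_closedBall_zero_iff.mp hb
    have hyz : dist y z = ‖b‖ := by
      rw [dist_eq_norm, ← hzb]; simp
    have hvw' : ‖v - w‖ < ε / (2 * C) := by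
      rw [← dist_eq_norm]
      exact lt_of_lt_of_le hvw (le_trans (min_le_right _ _) (min_le_right _ _))
    have h1' : dist x y < ε / 2 :=
      lt_of_lt_of_le hxy (le_trans (min_le_right _ _) (min_le_left _ _))
    have h2' : dist y z < ε / 2 := by
      rw [hyz]
      calc ‖b‖ ≤ C * ‖v - w‖ := hbn
        _ < C * (ε / (2 * C)) := by
            exact mul_lt_mul_of_pos_left hvw' hC
        _ = ε / 2 := by field_simp
    calc dist x z ≤ dist x y + dist y z := dist_triangle _ _ _
      _ < ε := by linarith
  · by_cases hxe : x ∈ interior (K v)ᶜ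
    · -- x exterior: find nearby (w,y) with y ∈ K w; then y ∈ K w \ K v
      obtain ⟨r, hr, hball⟩ := Metric.isOpen_iff.mp isOpen_interior x hxe
      set δ := min r (min (ε / 2) (ε / (2 * C))) with hδdef
      have hδ : 0 < δ := lt_min hr (lt_min (by linarith) (by positivity))
      obtain ⟨⟨w, y⟩, hp, hdist⟩ := Metric.mem_closure_iff.mp h1 δ hδ
      have hyw : y ∈ K w := hp
      rw [Prod.dist_eq, max_lt_iff] at hdist
      obtain ⟨hvw, hxy⟩ := hdist
      have hyv : y ∉ K v := interior_subset (hball (by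
        rw [Metric.mem_ball, dist_comm]
        exact lt_of_lt_of_le hxy (min_le_left _ _)))
      have hymem : y ∈ symmDiff (K v) (K w) := Set.mem_symmDiff.mpr (Or.inr ⟨hyw, hyv⟩)
      obtain ⟨z, hz, b, hb, hzb⟩ := hsym v w hymem
      refine ⟨z, hz, ?_⟩
      have hbn : ‖b‖ ≤ C * ‖v - w‖ := mem_closedBall_zero_iff.mp hb
      have hyz : dist y z = ‖b‖ := by
        rw [dist_eq_norm, ← hzb]; simp
      have hvw' : ‖v - w‖ < ε / (2 * C) := by
        rw [← dist_eq_norm]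
        exact lt_of_lt_of_le hvw (le_trans (min_le_right _ _) (min_le_right _ _))
      have h1' : dist x y < ε / 2 :=
        lt_of_lt_of_le hxy (le_trans (min_le_right _ _) (min_le_left _ _))
      have h2' : dist y z < ε / 2 := by
        rw [hyz]
        calc ‖b‖ ≤ C * ‖v - w‖ := hbn
          _ < C * (ε / (2 * C)) := mul_lt_mul_of_pos_left hvw' hC
          _ = ε / 2 := by field_simp
      calc dist x z ≤ dist x y + dist y z := dist_triangle _ _ _
        _ < ε := by linarith
    · -- x ∈ frontier (K v)
      have hxcl : x ∈ closure (K v) := by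
        rw [interior_compl] at hxe
        simpa using hxe
      have : x ∈ frontier (K v) := ⟨hxcl, hxi⟩
      exact ⟨x, hbd v this, by simpa using hε⟩
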